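/- arXiv:0712.2309 — 2 statements merged into one kernel-verified Lean document; each statement's English description precedes it below -/
import Mathlib

section
/- For any n and d with 2 * n^{d-2} > 3^d - 1, it is impossible to attack all board positions of the d-dimensional chess space of size n using just n queens; formally, if d ≥ 2 and 2 * n^{d-2} > 3^d - 1, then for every finite set Q of board positions with |Q| ≤ n there exists a board position x : Fin d → Fin n that is not in Q and is not attacked by any queen in Q. -/
/-- An attack vector in a `d`-dimensional chess space: a function `δ : Fin d → ℤ`
with every component in `{-1, 0, 1}` and not identically zero. -/
def IsAttackVector (d : ℕ) (δ : Fin d → ℤ) : Prop :=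
  (∀ i, δ i ∈ ({-1, 0, 1} : Set ℤ)) ∧ δ ≠ 0

/-- A queen at `q` attacks a board position `x` if `x ≠ q` and `x` lies at a
positive scalar distance from `q` along some attack vector. -/
def Attacks {n d : ℕ} (q x : Fin d → Fin n) : Prop :=
  x ≠ q ∧ ∃ δ : Fin d → ℤ, IsAttackVector d δ ∧
    ∃ s : ℤ, 0 < s ∧ ∀ i, (x i : ℤ) = (q i : ℤ) + s * δ i

def enc (z : ℤ) : Fin 3 := if z < 0 then 0 else if z = 0 then 1 else 2

lemma enc_mul {s t : ℤ} (hs : 0 < s) (ht : t ∈ ({-1,0,1} : Set ℤ)) :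
    enc (s * t) = enc t := by
  rcases ht with h|h|h <;> subst h <;> unfold enc <;> split_ifs <;>
    first | rfl | omega

lemma enc_inj {a b : ℤ} (ha : a ∈ ({-1,0,1} : Set ℤ)) (hb : b ∈ ({-1,0,1} : Set ℤ))
    (h : enc a = enc b) : a = b := by
  rcases ha with h1|h1|h1 <;> rcases hb with h2|h2|h2 <;> subst h1 <;> subst h2 <;>
    revert h <;> decide

lemma enc_ne_one {z : ℤ} (hz : z ≠ 0) : enc z ≠ 1 := by
  unfold enc; split_ifs <;> first | decide | omega

lemma neg_mem_pm {t : ℤ} (ht : t ∈ ({-1,0,1} : Set ℤ)) : -t ∈ ({-1,0,1} : Set ℤ) := by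
  rcases ht with h|h|h <;> subst h <;> simp

open scoped Classical in
open Finset in
lemma attacked_card (n d : ℕ) (q : Fin d → Fin n) :
    2 * (univ.filter (fun x => Attacks q x)).card ≤ (3 ^ d - 1) * n := by
  classical
  set A := univ.filter (fun x => Attacks q x) with hA
  set c1 : Fin d → Fin 3 := fun _ => 1 with hc1
  set D := (univ : Finset (Fin d → Fin 3)).erase c1 with hDdef
  have hD : D.card = 3 ^ d - 1 := by
    rw [hDdef, card_erase_of_mem (mem_univ _), card_univ]
    simp
  set nz : (Fin d → Fin n) → Finset (Fin d) :=
    fun x => univ.filter (fun i => x i ≠ q i) with hnz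
  set F : (Fin d → Fin n) × Bool → (Fin d → Fin 3) × ℕ := fun p =>
    (fun j => enc (if p.2 then ((q j : ℤ) - p.1 j) else ((p.1 j : ℤ) - q j)),
     if h : (nz p.1).Nonempty then ((p.1 ((nz p.1).min' h) : ℕ)) else 0) with hF
  -- facts about attacked positions
  have fact : ∀ x, Attacks q x → ∃ (δ : Fin d → ℤ) (s : ℤ), (∀ i, δ i ∈ ({-1,0,1} : Set ℤ)) ∧ 0 < s ∧
      (∀ j, (x j : ℤ) - q j = s * δ j) ∧ (∀ j, x j ≠ q j ↔ δ j ≠ 0) ∧ (nz x).Nonempty := by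
    intro x hx
    obtain ⟨hne, δ, ⟨hmem, h0⟩, s, hs, hxs⟩ := hx
    have hdiff : ∀ j, (x j : ℤ) - q j = s * δ j := fun j => by linarith [hxs j]
    have hiff : ∀ j, x j ≠ q j ↔ δ j ≠ 0 := by
      intro j
      have hd := hdiff j
      constructor
      · intro hj hδ
        rw [hδ, mul_zero, sub_eq_zero] at hd
        exact hj (Fin.ext (by exact_mod_cast hd))
      · intro hδ hj
        rw [hj, sub_self] at hd
        rcases mul_eq_zero.mp hd.symm with h' | h'
        · omega
        · exact hδ h'
    have hnonempty : (nz x).Nonempty := by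
      obtain ⟨j, hj⟩ := Function.ne_iff.mp h0
      exact ⟨j, by simp [hnz, (hiff j).mpr hj]⟩
    exact ⟨δ, s, hmem, hs, hdiff, hiff, hnonempty⟩
  have key : (A ×ˢ (univ : Finset Bool)).card ≤ (D ×ˢ range n).card := by
    apply card_le_card_of_injOn F
    · rintro ⟨x, b⟩ hp
      rw [Finset.mem_coe, mem_product] at hp
      have hx : Attacks q x := by simpa [hA] using hp.1
      obtain ⟨δ, s, hmem, hs, hdiff, hiff, hul⟩ := fact x hx
      rw [Finset.mem_coe, mem_product]
      constructor
      · -- first component in D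
        rw [hDdef, mem_erase]
        refine ⟨?_, mem_univ _⟩
        intro hcontra
        obtain ⟨j, hj⟩ := hul
        have hj' : δ j ≠ 0 := (hiff j).mp (by simpa [hnz] using hj)
        have := congrFun hcontra j
        simp only [hF, hc1] at this
        have h1 : (x j : ℤ) - q j ≠ 0 := by
          rw [hdiff j]; exact mul_ne_zero hs.ne' hj'
        have hne0 : (if b then ((q j : ℤ) - x j) else ((x j : ℤ) - q j)) ≠ 0 := by
          cases b <;> simp only [if_true, if_false, Bool.false_eq_true] <;> omega
        exact enc_ne_one hne0 this
      · -- second component in range n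
        simp only [hF]
        rw [dif_pos hul]
        exact mem_range.mpr (Fin.is_lt _)
    · rintro ⟨x, b⟩ hp ⟨y, c⟩ hp' heq
      simp only [mem_coe, mem_product] at hp hp'
      have hx : Attacks q x := by simpa [hA] using hp.1
      have hy : Attacks q y := by simpa [hA] using hp'.1
      obtain ⟨δx, s, hmx, hs, hdx, hix, hnex⟩ := fact x hx
      obtain ⟨δy, t, hmy, ht, hdy, hiy, hney⟩ := fact y hy
      have hfst := congrArg Prod.fst heq
      have hsnd := congrArg Prod.snd heq
      simp only [hF] at hfst hsnd
      -- pointwise sign equality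
      have hsg : ∀ j, (if b then -δx j else δx j) = (if c then -δy j else δy j) := by
        intro j
        have hj := congrFun hfst j
        have e1 : enc (if b then ((q j : ℤ) - x j) else ((x j : ℤ) - q j))
            = enc (if b then -δx j else δx j) := by
          cases b <;> simp only [if_true, if_false, Bool.false_eq_true]
          · rw [hdx j]; exact enc_mul hs (hmx j)
          · rw [show (q j : ℤ) - x j = s * (-δx j) by rw [← neg_sub, hdx j]; ring]
            exact enc_mul hs (neg_mem_pm (hmx j))
        have e2 : enc (if c then ((q j : ℤ) - y j) else ((y j : ℤ) - q j))
            = enc (if c then -δy j else δy j) := by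
          cases c <;> simp only [if_true, if_false, Bool.false_eq_true]
          · rw [hdy j]; exact enc_mul ht (hmy j)
          · rw [show (q j : ℤ) - y j = t * (-δy j) by rw [← neg_sub, hdy j]; ring]
            exact enc_mul ht (neg_mem_pm (hmy j))
        apply enc_inj ?_ ?_ (by rw [← e1, ← e2]; exact hj)
        · cases b <;> simp only [if_true, if_false, Bool.false_eq_true]
          exacts [hmx j, neg_mem_pm (hmx j)]
        · cases c <;> simp only [if_true, if_false, Bool.false_eq_true]
          exacts [hmy j, neg_mem_pm (hmy j)]
      -- nz sets are equal
      have hnzeq : nz x = nz y := by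
        ext i
        simp only [hnz, Finset.mem_filter, Finset.mem_univ, true_and]
        rw [hix i, hiy i]
        have h5 := hsg i
        cases b <;> cases c <;>
          simp only [Bool.false_eq_true, if_true, if_false, ite_true, ite_false] at h5 <;>
          omega
      -- common least index
      rw [dif_pos hnex, dif_pos (hnzeq ▸ hnex)] at hsnd
      set i := (nz x).min' hnex with hi
      have hival : ((nz y).min' (hnzeq ▸ hnex)) = i := by rw [hi]; congr 1; rw [hnzeq]
      rw [hival] at hsnd
      have hxyi : (x i : ℤ) = (y i : ℤ) := by exact_mod_cast hsnd
      have himem : i ∈ nz x := min'_mem _ _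
      have hδxi : δx i ≠ 0 := (hix i).mp (by simpa [hnz] using himem)
      have hδyi : δy i ≠ 0 := by
        have h5 := hsg i
        cases b <;> cases c <;>
          simp only [Bool.false_eq_true, if_true, if_false, ite_true, ite_false] at h5 <;>
          omega
      -- relate s, t
      have hsti : s * δx i = t * δy i := by
        have h1 := hdx i; have h2 := hdy i
        linarith
      have hbc : b = c := by
        by_contra hbc
        have hneg : δx i = -δy i := by
          have h5 := hsg i
          cases b <;> cases c <;>
            simp only [Bool.false_eq_true, if_true, if_false, ite_true, ite_false] at h5 <;>
            first | (exact absurd rfl hbc) | omega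
        rw [hneg] at hsti
        rcases hmy i with h' | h' | h' <;> rw [h'] at hsti hδyi <;>
          simp only [neg_neg, mul_one, mul_neg_one, neg_zero, mul_zero, neg_neg] at hsti <;>
          omega
      subst hbc
      have hδeq : δx = δy := by
        funext j
        have h5 := hsg j
        cases b <;>
          simp only [Bool.false_eq_true, if_true, if_false, ite_true, ite_false] at h5 <;>
          omega
      rw [hδeq] at hsti
      have hst : s = t := by
        rcases hmy i with h' | h' | h' <;> rw [h'] at hsti hδyi <;>
          simp only [mul_one, mul_neg_one, mul_zero] at hsti <;> omega
      have hxy : x = y := by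
        funext j
        have h1 := hdx j
        have h2 := hdy j
        rw [← hδeq, ← hst] at h2
        have h3 : (x j : ℤ) = (y j : ℤ) := by linarith
        exact Fin.ext (by exact_mod_cast h3)
      rw [hxy]
  rw [card_product, card_product, hD, card_range] at key
  simpa [mul_comm] using key

theorem n_queens_do_not_suffice (n d : ℕ) (hd : 2 ≤ d)
    (h : 2 * n ^ (d - 2) > 3 ^ d - 1)
    (Q : Finset (Fin d → Fin n)) (hQ : Q.card ≤ n) :
    ∃ x : Fin d → Fin n, x ∉ Q ∧ ∀ q ∈ Q, ¬ Attacks q x := by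
  classical
  -- n ≥ 3
  have hn : 3 ≤ n := by
    by_contra hc
    push_neg at hc
    have h1 : n ^ (d - 2) ≤ 2 ^ (d - 2) := Nat.pow_le_pow_left (by omega) _
    have h2 : 2 * 2 ^ (d - 2) = 2 ^ (d - 1) := by
      rw [← pow_succ']
      congr 1
      omega
    have h3 : (2:ℕ) ^ d = 2 * 2 ^ (d - 1) := by
      rw [← pow_succ']
      congr 1
      omega
    have h4 : (2:ℕ) ^ d ≤ 3 ^ d := Nat.pow_le_pow_left (by omega) d
    have h5 : 1 ≤ (2:ℕ) ^ (d - 1) := Nat.one_le_two_pow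
    omega
  set A : (Fin d → Fin n) → Finset (Fin d → Fin n) :=
    fun q => Finset.univ.filter (fun x => Attacks q x) with hAdef
  set C : Finset (Fin d → Fin n) := Q ∪ Q.biUnion A with hC
  obtain ⟨m, hm⟩ : ∃ m, 3 ^ d = m + 1 :=
    ⟨3 ^ d - 1, by have : 1 ≤ (3:ℕ) ^ d := Nat.one_le_pow _ _ (by omega); omega⟩
  have hcard : 2 * C.card < 2 * n ^ d := by
    have hb : (Q.biUnion A).card ≤ ∑ q ∈ Q, (A q).card := Finset.card_biUnion_le
    have hsum : 2 * ∑ q ∈ Q, (A q).card ≤ Q.card * (m * n) := by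
      rw [Finset.mul_sum]
      calc ∑ q ∈ Q, 2 * (A q).card ≤ ∑ _q ∈ Q, (3 ^ d - 1) * n :=
            Finset.sum_le_sum fun q _ => attacked_card n d q
        _ = Q.card * (m * n) := by rw [Finset.sum_const, smul_eq_mul, hm, Nat.add_sub_cancel]
    have hCb : C.card ≤ Q.card + (Q.biUnion A).card :=
      le_trans (Finset.card_union_le _ _) (by omega)
    -- arithmetic
    set k := n ^ (d - 2) with hkdef
    have hk : n ^ d = n ^ 2 * k := by
      rw [hkdef, ← pow_add]
      congr 1
      omega
    have hm2 : m + 1 ≤ 2 * k := by omega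
    have e1 : (m + 1) * n ^ 2 ≤ 2 * k * n ^ 2 := Nat.mul_le_mul_right _ hm2
    have e2 : Q.card * (m * n) ≤ n * (m * n) := Nat.mul_le_mul_right _ hQ
    have e3 : n * (m * n) = m * n ^ 2 := by ring
    have hn2 : 2 * n < n ^ 2 := by nlinarith
    linarith
  have huniv : (Finset.univ : Finset (Fin d → Fin n)).card = n ^ d := by
    simp
  obtain ⟨x, hx⟩ : ∃ x, x ∉ C := by
    by_contra hall
    push_neg at hall
    have : (Finset.univ : Finset (Fin d → Fin n)) ⊆ C := fun x _ => hall x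
    have := Finset.card_le_card this
    omega
  refine ⟨x, ?_, ?_⟩
  · intro hxQ
    exact hx (Finset.mem_union_left _ hxQ)
  · intro q hq hatt
    exact hx (Finset.mem_union_right _ (Finset.mem_biUnion.mpr
      ⟨q, hq, by simp [hAdef, hatt]⟩))
end

section
/- If 2 * n^{d-k-1} > 3^d - 1, it is not possible to attack all board positions of the d-dimensional chess space of size n using n^k queens; formally, if k + 1 ≤ d and 2 * n^{d-k-1} > 3^d - 1, then for every finite set Q of board positions with |Q| ≤ n^k there exists a board position x : Fin d → Fin n that is not in Q and is not attacked by any queen in Q. -/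
open Finset


noncomputable def firstNZ {d : ℕ} [Nonempty (Fin d)] (δ : Fin d → ℤ) : Fin d :=
  if h : (Finset.univ.filter fun i => δ i ≠ 0).Nonempty then
    (Finset.univ.filter fun i => δ i ≠ 0).min' h
  else Classical.arbitrary _

def Dall (d : ℕ) : Finset (Fin d → ℤ) :=
  (Fintype.piFinset fun _ => ({-1,0,1} : Finset ℤ)).erase 0

noncomputable def Dpos (d : ℕ) [Nonempty (Fin d)] : Finset (Fin d → ℤ) :=
  (Dall d).filter fun e => e (firstNZ e) = 1

lemma card_Dall (d : ℕ) : (Dall d).card = 3 ^ d - 1 := by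
  have h0 : (0 : Fin d → ℤ) ∈ Fintype.piFinset fun _ => ({-1,0,1} : Finset ℤ) := by
    simp
  rw [Dall, Finset.card_erase_of_mem h0, Fintype.card_piFinset]
  simp

lemma firstNZ_congr {d : ℕ} [Nonempty (Fin d)] {δ e : Fin d → ℤ}
    (h : ∀ i, δ i ≠ 0 ↔ e i ≠ 0) : firstNZ δ = firstNZ e := by
  have hf : (Finset.univ.filter fun i => δ i ≠ 0) = (Finset.univ.filter fun i => e i ≠ 0) := by
    ext i; simp only [Finset.mem_filter, Finset.mem_univ, true_and]; exact h i
  unfold firstNZ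
  simp_rw [hf]

lemma firstNZ_ne {d : ℕ} [Nonempty (Fin d)] {δ : Fin d → ℤ} (h : δ ≠ 0) :
    δ (firstNZ δ) ≠ 0 := by
  have hne : (Finset.univ.filter fun i => δ i ≠ 0).Nonempty := by
    rcases Function.ne_iff.mp h with ⟨i, hi⟩
    simp only [Pi.zero_apply] at hi
    exact ⟨i, by simp [hi]⟩
  have hm := (Finset.univ.filter fun i => δ i ≠ 0).min'_mem hne
  rw [Finset.mem_filter] at hm
  unfold firstNZ
  rw [dif_pos hne]
  exact hm.2

lemma norm_mem_Dpos {d : ℕ} [Nonempty (Fin d)] {δ : Fin d → ℤ} (hδ : IsAttackVector d δ) :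
    (fun i => δ (firstNZ δ) * δ i) ∈ Dpos d ∧
      firstNZ (fun i => δ (firstNZ δ) * δ i) = firstNZ δ := by
  obtain ⟨hmem, hnz⟩ := hδ
  set j := firstNZ δ with hj
  have hj0 : δ j ≠ 0 := firstNZ_ne hnz
  have hcongr : ∀ i, (fun i => δ j * δ i) i ≠ 0 ↔ δ i ≠ 0 := by
    intro i; simp [mul_ne_zero_iff, hj0]
  have hfz : firstNZ (fun i => δ j * δ i) = j := firstNZ_congr hcongr
  simp only [Set.mem_insert_iff, Set.mem_singleton_iff] at hmem
  have hsq : δ j * δ j = 1 := by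
    rcases hmem j with h | h | h
    · rw [h]; norm_num
    · exact absurd h hj0
    · rw [h]; norm_num
  refine ⟨Finset.mem_filter.mpr ⟨Finset.mem_erase.mpr ⟨?_, ?_⟩, by rw [hfz]; exact hsq⟩, hfz⟩
  · intro h0
    have := congrFun h0 j
    simp only [Pi.zero_apply] at this
    exact hj0 (by rcases mul_eq_zero.mp this with h | h <;> [exact h; exact h])
  · rw [Fintype.mem_piFinset]
    intro i
    rcases hmem j with ha | ha | ha <;> rcases hmem i with hb | hb | hb <;>
      simp [ha, hb]

lemma two_card_Dpos {d : ℕ} [Nonempty (Fin d)] : 2 * (Dpos d).card ≤ 3 ^ d - 1 := by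
  have hsub : Dpos d ⊆ Dall d := Finset.filter_subset _ _
  have hinj : ∀ e ∈ Dpos d, -e ∈ Dall d \ Dpos d := by
    intro e he
    rw [Dpos, Finset.mem_filter] at he
    obtain ⟨heD, he1⟩ := he
    rw [Dall, Finset.mem_erase, Fintype.mem_piFinset] at heD
    obtain ⟨hez, hemem⟩ := heD
    have hnz : (-e : Fin d → ℤ) ≠ 0 := by
      intro h0; exact hez (by funext i; have := congrFun h0 i; simp at this; simpa using this)
    have hcongr : ∀ i, (-e : Fin d → ℤ) i ≠ 0 ↔ e i ≠ 0 := by intro i; simp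
    have hfz : firstNZ (-e : Fin d → ℤ) = firstNZ e := firstNZ_congr hcongr
    rw [Finset.mem_sdiff]
    constructor
    · rw [Dall, Finset.mem_erase, Fintype.mem_piFinset]
      refine ⟨hnz, fun i => ?_⟩
      have := hemem i
      simp only [Finset.mem_insert, Finset.mem_singleton] at this ⊢
      rcases this with h | h | h <;> simp [h]
    · intro hmem
      rw [Dpos, Finset.mem_filter] at hmem
      rw [hfz] at hmem
      have := hmem.2
      simp only [Pi.neg_apply, he1] at this
      norm_num at this
  have hcard : (Dpos d).card ≤ (Dall d \ Dpos d).card := by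
    apply Finset.card_le_card_of_injOn (fun e => -e) hinj
    intro a _ b _ hab
    simpa using congrArg Neg.neg hab
  have := Finset.card_sdiff_add_card_eq_card hsub
  have hD := card_Dall d
  omega

lemma attacked_card_le {n d : ℕ} [Nonempty (Fin d)] (q : Fin d → Fin n)
    [DecidablePred fun x : Fin d → Fin n => Attacks q x] :
    (Finset.univ.filter fun x => Attacks q x).card ≤ (Dpos d).card * n := by
  classical
  have H : ∀ x : Fin d → Fin n, ∃ δ : Fin d → ℤ, ∃ s : ℤ,
      Attacks q x → IsAttackVector d δ ∧ 0 < s ∧ ∀ i, (x i : ℤ) = (q i : ℤ) + s * δ i := by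
    intro x
    by_cases hx : Attacks q x
    · obtain ⟨-, δ, hδ, s, hs, hx'⟩ := hx
      exact ⟨δ, s, fun _ => ⟨hδ, hs, hx'⟩⟩
    · exact ⟨0, 0, fun hc => absurd hc hx⟩
  choose δf sf hf using H
  have key := Finset.card_le_card_of_injOn
    (s := Finset.univ.filter fun x => Attacks q x)
    (f := fun x : Fin d → Fin n =>
      ((fun i => δf x (firstNZ (δf x)) * δf x i, x (firstNZ (δf x))) : (Fin d → ℤ) × Fin n))
    (t := Dpos d ×ˢ Finset.univ) ?_ ?_
  · calc (Finset.univ.filter fun x => Attacks q x).card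
        ≤ (Dpos d ×ˢ (Finset.univ : Finset (Fin n))).card := key
      _ = (Dpos d).card * n := by rw [Finset.card_product]; simp
  · intro x hx
    rw [Finset.coe_filter] at hx
    obtain ⟨hav, -, -⟩ := hf x hx.2
    rw [Finset.coe_product, Set.mem_prod]
    exact ⟨(norm_mem_Dpos hav).1, Finset.mem_univ _⟩
  · intro x hx y hy hxy
    simp only [Finset.coe_filter, Set.mem_setOf_eq, Finset.mem_univ, true_and] at hx hy
    obtain ⟨hax, hsx, hxeq⟩ := hf x hx
    obtain ⟨hay, hsy, hyeq⟩ := hf y hy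
    obtain ⟨hmx, hjx⟩ := norm_mem_Dpos hax
    obtain ⟨hmy, hjy⟩ := norm_mem_Dpos hay
    have hee : (fun i => δf x (firstNZ (δf x)) * δf x i)
        = (fun i => δf y (firstNZ (δf y)) * δf y i) := congrArg Prod.fst hxy
    have hjj : firstNZ (δf x) = firstNZ (δf y) := by
      rw [← hjx, ← hjy, hee]
    set j := firstNZ (δf x) with hjdef
    have hxy2 : x j = y j := by
      have := congrArg Prod.snd hxy
      simpa [← hjj] using this
    -- e j = 1
    have hx1 : δf x j * δf x j = 1 := by
      have := Finset.mem_filter.mp hmx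
      have h2 := this.2
      rw [hjx] at h2
      exact h2
    have hy1 : δf y j * δf y j = 1 := by
      have := Finset.mem_filter.mp hmy
      have h2 := this.2
      rw [hjy, ← hjj] at h2
      exact h2
    -- scalar equality
    set ex := fun i => δf x (firstNZ (δf x)) * δf x i with hexdef
    set ey := fun i => δf y (firstNZ (δf y)) * δf y i with heydef
    set t := sf x * δf x j with htdef
    set t' := sf y * δf y j with ht'def
    have hxe : ∀ i, (x i : ℤ) = (q i : ℤ) + t * ex i := by
      intro i
      have h1 : t * ex i = sf x * ((δf x j * δf x j) * δf x i) := by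
        simp only [hexdef, ← hjdef]; ring
      rw [h1, hx1, one_mul]
      exact hxeq i
    have hye : ∀ i, (y i : ℤ) = (q i : ℤ) + t' * ey i := by
      intro i
      have h1 : t' * ey i = sf y * ((δf y j * δf y j) * δf y i) := by
        simp only [heydef, ← hjj]; ring
      rw [h1, hy1, one_mul]
      exact hyeq i
    have hexj : ex j = 1 := by simp only [hexdef, ← hjdef]; exact hx1
    have heyj : ey j = 1 := by simp only [heydef, ← hjj]; exact hy1
    have htt : t = t' := by
      have h1 := hxe j
      have h2 := hye j
      rw [hexj, mul_one] at h1
      rw [heyj, mul_one] at h2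
      have h3 : ((x j : ℕ) : ℤ) = ((y j : ℕ) : ℤ) := by exact_mod_cast congrArg (fun z : Fin n => ((z : ℕ) : ℤ)) hxy2
      omega
    funext i
    have h1 := hxe i
    have h2 := hye i
    have hexy : ex i = ey i := congrFun hee i
    rw [htt, hexy] at h1
    have : ((x i : ℕ) : ℤ) = ((y i : ℕ) : ℤ) := by rw [h1, h2]
    exact Fin.ext (by exact_mod_cast this)

theorem nk_queens_do_not_suffice (n d k : ℕ) (hkd : k + 1 ≤ d)
    (h : 2 * n ^ (d - k - 1) > 3 ^ d - 1)
    (Q : Finset (Fin d → Fin n)) (hQ : Q.card ≤ n ^ k) :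
    ∃ x : Fin d → Fin n, x ∉ Q ∧ ∀ q ∈ Q, ¬ Attacks q x := by
  classical
  have hne : Nonempty (Fin d) := ⟨⟨0, by omega⟩⟩
  set m := d - k - 1 with hm
  have hd : d = k + m + 1 := by omega
  have h3 : 2 ≤ 3 ^ d - 1 := by
    have h31 : 3 ^ 1 ≤ 3 ^ d := Nat.pow_le_pow_right (by norm_num) (by omega)
    simp at h31; omega
  have hnm : 2 ≤ n ^ m := by omega
  have hn2 : 2 ≤ n := by
    by_contra hn
    have hle : n ^ m ≤ 1 ^ m := Nat.pow_le_pow_left (by omega) m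
    simp at hle; omega
  set c := (Dpos d).card with hc
  have hcb : 2 * c ≤ 3 ^ d - 1 := two_card_Dpos
  set C := Q ∪ Q.biUnion (fun q => Finset.univ.filter fun x => Attacks q x) with hC
  have hstep : c * n + 1 < n ^ (m + 1) := by
    have h1 : (c + 1) * n ≤ n ^ m * n := Nat.mul_le_mul_right _ (by omega)
    have h2 : c * n + 1 < (c + 1) * n := by nlinarith
    calc c * n + 1 < (c + 1) * n := h2
      _ ≤ n ^ m * n := h1
      _ = n ^ (m + 1) := by rw [pow_succ]
  have hCcard : C.card < n ^ d := by
    have h1 : (Q.biUnion fun q => Finset.univ.filter fun x => Attacks q x).card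
        ≤ Q.card * (c * n) := by
      calc (Q.biUnion fun q => Finset.univ.filter fun x => Attacks q x).card
          ≤ ∑ q ∈ Q, (Finset.univ.filter fun x => Attacks q x).card :=
            Finset.card_biUnion_le
        _ ≤ Q.card * (c * n) := by
            have := Finset.sum_le_card_nsmul Q _ (c * n)
              (fun q _ => attacked_card_le (n := n) q)
            simpa [smul_eq_mul] using this
    have h2 : C.card ≤ Q.card * (c * n + 1) := by
      calc C.card ≤ Q.card + (Q.biUnion fun q => Finset.univ.filter fun x => Attacks q x).card :=
            Finset.card_union_le _ _
        _ ≤ Q.card + Q.card * (c * n) := by omega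
        _ = Q.card * (c * n + 1) := by ring
    have h4 : Q.card * (c * n + 1) < n ^ k * n ^ (m + 1) := by
      have hk1 : 1 ≤ n ^ k := Nat.one_le_pow _ _ (by omega)
      calc Q.card * (c * n + 1) ≤ n ^ k * (c * n + 1) := Nat.mul_le_mul_right _ hQ
        _ < n ^ k * n ^ (m + 1) := by
          have hk0 : 0 < n ^ k := Nat.pow_pos (by omega)
          exact mul_lt_mul_of_pos_left hstep hk0
    have h5 : n ^ k * n ^ (m + 1) = n ^ d := by rw [← pow_add]; congr 1; omega
    omega
  have hx : ∃ x : Fin d → Fin n, x ∉ C := by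
    by_contra hall
    push_neg at hall
    have heq : C = Finset.univ := Finset.eq_univ_iff_forall.mpr hall
    rw [heq, Finset.card_univ] at hCcard
    have : Fintype.card (Fin d → Fin n) = n ^ d := by
      rw [Fintype.card_fun]; simp
    omega
  obtain ⟨x, hx⟩ := hx
  refine ⟨x, fun hxQ => hx (Finset.mem_union_left _ hxQ), fun q hq hatt => ?_⟩
  exact hx (Finset.mem_union_right _ (Finset.mem_biUnion.mpr
    ⟨q, hq, Finset.mem_filter.mpr ⟨Finset.mem_univ _, hatt⟩⟩))
end
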